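/- Assume a_1, …, a_ℓ are nonzero and pairwise non-σ-conjugate, and let x = (x^(1) | ⋯ | x^(ℓ)) ∈ F^n satisfy rk_q(x^(i)) = n_i for every i = 1, …, ℓ. Then for every d ∈ ℕ, the σ-generalized Moore matrix λ_d(x)_a⃗ ∈ F^(d×n) satisfies rk_F(λ_d(x)_a⃗) = min{d, n}. -/

import Mathlib

namespace Stmt1

/-- `genNorm σ a i = σ^(i-1)(a) ⋯ σ(a) · a`, the generalized power function `N_i(a)`. -/
def genNorm {F : Type} [Field F] (σ : F ≃+* F) (a : F) : ℕ → F
  | 0 => 1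
  | i + 1 => (⇑σ)^[i] a * genNorm σ a i

/-- Generalized operator `D_a^i(b) = σ^i(b) · N_i(a)` for `i ∈ ℕ`. -/
def opev {F : Type} [Field F] (σ : F ≃+* F) (a b : F) (i : ℕ) : F :=
  (⇑σ)^[i] b * genNorm σ a i

/-- `b` is σ-conjugate to `a`, i.e. `b = σ(c)·a·c⁻¹` for some nonzero `c`. -/
def SConj {F : Type} [Field F] (σ : F ≃+* F) (a b : F) : Prop :=
  ∃ c : F, c ≠ 0 ∧ b = σ c * a * c⁻¹

/-- σ-generalized Moore matrix `λ_d(x)_a⃗` w.r.t. the length partition `nn`: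
its row `r` applies `D_{a_i}^r` entrywise to the `i`-th block of `x`. -/
def moore {F : Type} [Field F] (σ : F ≃+* F) {ℓ : ℕ} (nn : Fin ℓ → ℕ) (aa : Fin ℓ → F)
    (d : ℕ) (x : (Σ i : Fin ℓ, Fin (nn i)) → F) :
    Matrix (Fin d) (Σ i : Fin ℓ, Fin (nn i)) F :=
  Matrix.of fun r p => opev σ (aa p.1) (x p) (r : ℕ)

/-- `λ_d(X)_a⃗` for a matrix `X`: the stack of `λ_d(x_j)_a⃗` over the rows of `X`. -/
def mooreMat {F : Type} [Field F] (σ : F ≃+* F) {ℓ : ℕ} (nn : Fin ℓ → ℕ) (aa : Fin ℓ → F)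
    {s : ℕ} (d : ℕ) (X : Matrix (Fin s) (Σ i : Fin ℓ, Fin (nn i)) F) :
    Matrix (Fin s × Fin d) (Σ i : Fin ℓ, Fin (nn i)) F :=
  Matrix.of fun r p => opev σ (aa p.1) (X r.1 p) (r.2 : ℕ)

/-- `rk_q` of a vector: the `K`-dimension of the `K`-span of its entries. -/
noncomputable def rkq (K : Type) [Field K] {F : Type} [Field F] [Algebra K F] {ι : Type}
    (v : ι → F) : ℕ :=
  Module.finrank K (Submodule.span K (Set.range v))

/-- `rk_q` of a matrix: the `K`-dimension of the `K`-span of its columns. -/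
noncomputable def rkqMat (K : Type) [Field K] {F : Type} [Field F] [Algebra K F]
    {s : ℕ} {ι : Type} (X : Matrix (Fin s) ι F) : ℕ :=
  Module.finrank K (Submodule.span K (Set.range fun j : ι => fun r : Fin s => X r j))

/-- Sum-rank weight of a blockwise vector. -/
noncomputable def wtV (K : Type) [Field K] {F : Type} [Field F] [Algebra K F] {ℓ : ℕ}
    (nn : Fin ℓ → ℕ) (x : (Σ i : Fin ℓ, Fin (nn i)) → F) : ℕ :=
  ∑ i, rkq K fun μ : Fin (nn i) => x ⟨i, μ⟩

/-- Sum-rank weight of a blockwise matrix. -/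
noncomputable def wtM (K : Type) [Field K] {F : Type} [Field F] [Algebra K F] {s ℓ : ℕ}
    (nn : Fin ℓ → ℕ) (X : Matrix (Fin s) (Σ i : Fin ℓ, Fin (nn i)) F) : ℕ :=
  ∑ i, rkqMat K (Matrix.of fun (r : Fin s) (μ : Fin (nn i)) => X r ⟨i, μ⟩)

/-- Codeword `C(M) = M · λ_k(β)_a⃗` of the `s`-interleaved linearized Reed–Solomon code. -/
def codeword {F : Type} [Field F] (σ : F ≃+* F) {ℓ : ℕ} (nn : Fin ℓ → ℕ) (aa : Fin ℓ → F)
    (β : (Σ i : Fin ℓ, Fin (nn i)) → F) {s : ℕ} (k : ℕ) (M : Matrix (Fin s) (Fin k) F) :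
    Matrix (Fin s) (Σ i : Fin ℓ, Fin (nn i)) F :=
  M * moore σ nn aa k β

section AuxLemmas

variable {K F : Type} [Field K] [Field F] [Algebra K F] (σ : F ≃+* F)

lemma it_add (r : ℕ) (x y : F) : (⇑σ)^[r] (x + y) = (⇑σ)^[r] x + (⇑σ)^[r] y := by
  induction r generalizing x y with
  | zero => rfl
  | succ n ih =>
    rw [Function.iterate_succ_apply, Function.iterate_succ_apply,
      Function.iterate_succ_apply, map_add, ih]

lemma it_mul (r : ℕ) (x y : F) : (⇑σ)^[r] (x * y) = (⇑σ)^[r] x * (⇑σ)^[r] y := by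
  induction r generalizing x y with
  | zero => rfl
  | succ n ih =>
    rw [Function.iterate_succ_apply, Function.iterate_succ_apply,
      Function.iterate_succ_apply, map_mul, ih]

lemma it_sub (r : ℕ) (x y : F) : (⇑σ)^[r] (x - y) = (⇑σ)^[r] x - (⇑σ)^[r] y := by
  induction r generalizing x y with
  | zero => rfl
  | succ n ih =>
    rw [Function.iterate_succ_apply, Function.iterate_succ_apply,
      Function.iterate_succ_apply, map_sub, ih]

lemma it_zero (r : ℕ) : (⇑σ)^[r] (0 : F) = 0 := by
  induction r with
  | zero => rfl
  | succ n ih => rw [Function.iterate_succ_apply, map_zero, ih]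

lemma it_one (r : ℕ) : (⇑σ)^[r] (1 : F) = 1 := by
  induction r with
  | zero => rfl
  | succ n ih => rw [Function.iterate_succ_apply, map_one, ih]

lemma it_inv (r : ℕ) (x : F) : (⇑σ)^[r] x⁻¹ = ((⇑σ)^[r] x)⁻¹ := by
  induction r generalizing x with
  | zero => rfl
  | succ n ih => rw [Function.iterate_succ_apply, Function.iterate_succ_apply, map_inv₀, ih]

lemma it_ne_zero (r : ℕ) {x : F} (hx : x ≠ 0) : (⇑σ)^[r] x ≠ 0 := by
  intro h
  exact hx (σ.injective.iterate r (h.trans (it_zero σ r).symm))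

lemma it_fixK (hK : ∀ k : K, σ (algebraMap K F k) = algebraMap K F k) (r : ℕ) (k : K) :
    (⇑σ)^[r] (algebraMap K F k) = algebraMap K F k := by
  induction r with
  | zero => rfl
  | succ n ih => rw [Function.iterate_succ_apply, hK, ih]

lemma it_smul (hK : ∀ k : K, σ (algebraMap K F k) = algebraMap K F k) (r : ℕ) (k : K) (x : F) :
    (⇑σ)^[r] (k • x) = k • (⇑σ)^[r] x := by
  rw [Algebra.smul_def, Algebra.smul_def, it_mul, it_fixK σ hK]


variable {K F : Type} [Field K] [Field F] [Algebra K F] (σ : F ≃+* F)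

/-- The `K`-linear operator `b ↦ ∑_{r ≤ d} c_r D_a^r(b)`. -/
noncomputable def Lmap (hK : ∀ k : K, σ (algebraMap K F k) = algebraMap K F k)
    (c : ℕ → F) (d : ℕ) (a : F) : F →ₗ[K] F where
  toFun b := ∑ r ∈ Finset.range (d + 1), c r * ((⇑σ)^[r] b * genNorm σ a r)
  map_add' x y := by
    simp only [it_add]
    rw [← Finset.sum_add_distrib]
    exact Finset.sum_congr rfl fun r _ => by ring
  map_smul' k x := by
    simp only [it_smul σ hK, RingHom.id_apply]
    rw [Finset.smul_sum]
    refine Finset.sum_congr rfl fun r _ => ?_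
    rw [Algebra.smul_def, Algebra.smul_def]
    ring

lemma Lmap_apply (hK : ∀ k : K, σ (algebraMap K F k) = algebraMap K F k)
    (c : ℕ → F) (d : ℕ) (a b : F) :
    Lmap σ hK c d a b = ∑ r ∈ Finset.range (d + 1), c r * ((⇑σ)^[r] b * genNorm σ a r) := rfl

/-- The `K`-linear operator `u ↦ σ(u)·a − e·u` (i.e. `t − e` evaluated at class rep `a`). -/
noncomputable def Tmap (hK : ∀ k : K, σ (algebraMap K F k) = algebraMap K F k)
    (e a : F) : F →ₗ[K] F where
  toFun u := σ u * a - e * u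
  map_add' x y := by
    show σ (x + y) * a - e * (x + y) = (σ x * a - e * x) + (σ y * a - e * y)
    rw [map_add]; ring
  map_smul' k x := by
    show σ (k • x) * a - e * (k • x) = k • (σ x * a - e * x)
    rw [Algebra.smul_def, Algebra.smul_def, map_mul, hK]
    ring

lemma Tmap_apply (hK : ∀ k : K, σ (algebraMap K F k) = algebraMap K F k) (e a u : F) :
    Tmap σ hK e a u = σ u * a - e * u := rfl

/-- `N_r(σ(b)·a·b⁻¹) = σ^r(b)·N_r(a)·b⁻¹`. -/
lemma genNorm_conj {b : F} (hb : b ≠ 0) (a : F) (r : ℕ) :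
    genNorm σ (σ b * a * b⁻¹) r = (⇑σ)^[r] b * genNorm σ a r * b⁻¹ := by
  induction r with
  | zero =>
    simp only [genNorm, Function.iterate_zero, id_eq]
    field_simp
  | succ n ih =>
    show (⇑σ)^[n] (σ b * a * b⁻¹) * genNorm σ (σ b * a * b⁻¹) n = _
    rw [ih, it_mul, it_mul, it_inv]
    rw [← Function.iterate_succ_apply (⇑σ) n b]
    show (⇑σ)^[n+1] b * (⇑σ)^[n] a * ((⇑σ)^[n] b)⁻¹ * ((⇑σ)^[n] b * genNorm σ a n * b⁻¹)
      = (⇑σ)^[n+1] b * ((⇑σ)^[n] a * genNorm σ a n) * b⁻¹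
    have hnb : (⇑σ)^[n] b ≠ 0 := it_ne_zero σ n hb
    field_simp

/-- Master composition identity:  `L_c(u) = L_g(T_e u) + (c₀ + g₀ e)·u`  whenever
`g` is the quotient-coefficient sequence of `c` upon division by `t − e`. -/
lemma comp_identity (c g : ℕ → F) (e : F) (d : ℕ)
    (htop : g (d + 1) = 0)
    (hrec : ∀ r ≤ d, c (r + 1) = g r - g (r + 1) * (⇑σ)^[r + 1] e)
    (a u : F) :
    ∑ r ∈ Finset.range (d + 2), c r * ((⇑σ)^[r] u * genNorm σ a r)
      = (∑ s ∈ Finset.range (d + 1), g s * ((⇑σ)^[s] (σ u * a - e * u) * genNorm σ a s))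
        + (c 0 + g 0 * e) * u := by
  set h : ℕ → F := fun s => g s * ((⇑σ)^[s] e * (⇑σ)^[s] u) * genNorm σ a s with hh
  have key : ∀ s ∈ Finset.range (d + 1),
      c (s + 1) * ((⇑σ)^[s + 1] u * genNorm σ a (s + 1))
        = (g s * ((⇑σ)^[s] (σ u * a - e * u) * genNorm σ a s)) + (h s - h (s + 1)) := by
    intro s hs
    rw [Finset.mem_range] at hs
    rw [hrec s (Nat.lt_succ_iff.mp hs)]
    simp only [hh]
    rw [it_sub, it_mul, it_mul, ← Function.iterate_succ_apply (⇑σ) s u]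
    show _ = g s * (((⇑σ)^[s+1] u * (⇑σ)^[s] a - (⇑σ)^[s] e * (⇑σ)^[s] u) * genNorm σ a s) + _
    show (g s - g (s + 1) * (⇑σ)^[s+1] e) * ((⇑σ)^[s+1] u * ((⇑σ)^[s] a * genNorm σ a s)) = _ + (g s * ((⇑σ)^[s] e * (⇑σ)^[s] u) * genNorm σ a s - g (s+1) * ((⇑σ)^[s+1] e * (⇑σ)^[s+1] u) * ((⇑σ)^[s] a * genNorm σ a s))
    ring
  rw [Finset.sum_range_succ' (fun r => c r * ((⇑σ)^[r] u * genNorm σ a r)) (d + 1)]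
  rw [Finset.sum_congr rfl key, Finset.sum_add_distrib, Finset.sum_range_sub' h (d + 1)]
  simp only [hh, htop, genNorm, Function.iterate_zero, id_eq]
  ring


variable {K F : Type} [Field K] [Field F] [Algebra K F] (σ : F ≃+* F)

lemma finrank_comap_le [FiniteDimensional K F] (φ : F →ₗ[K] F) (W : Submodule K F) :
    Module.finrank K (W.comap φ) ≤
      Module.finrank K (LinearMap.ker φ) + Module.finrank K W := by
  set U := W.comap φ with hU
  have hUW : ∀ x ∈ U, φ x ∈ W := fun x hx => hx
  set ψ := φ.restrict hUW with hψ
  have h1 := LinearMap.finrank_range_add_finrank_ker ψ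
  have h2 : Module.finrank K (LinearMap.range ψ) ≤ Module.finrank K W :=
    Submodule.finrank_le _
  have h3 : Module.finrank K (LinearMap.ker ψ) ≤ Module.finrank K (LinearMap.ker φ) := by
    rw [← Submodule.finrank_map_subtype_eq U (LinearMap.ker ψ)]
    apply Submodule.finrank_mono
    rintro y ⟨x, hx, rfl⟩
    have hx0 : ψ x = 0 := hx
    have : ((ψ x : W) : F) = 0 := by rw [hx0]; rfl
    rw [LinearMap.restrict_apply] at this
    exact LinearMap.mem_ker.mpr this
  omega

lemma finrank_ker_Tmap_le_one [FiniteDimensional K F]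
    (hK : ∀ k : K, σ (algebraMap K F k) = algebraMap K F k)
    (hfixr : ∀ w : F, σ w = w → w ∈ Set.range (algebraMap K F))
    {e a : F} (ha : a ≠ 0) (he : e ≠ 0) :
    Module.finrank K (LinearMap.ker (Tmap σ hK e a)) ≤ 1 := by
  by_cases hbot : LinearMap.ker (Tmap σ hK e a) = ⊥
  · rw [hbot, finrank_bot]; omega
  · obtain ⟨u, hu, hune⟩ := Submodule.exists_mem_ne_zero_of_ne_bot hbot
    have hσu : σ u ≠ 0 := fun h => hune (σ.injective (h.trans (map_zero σ).symm))
    have hle : LinearMap.ker (Tmap σ hK e a) ≤ Submodule.span K {u} := by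
      intro v hv
      have hu' : σ u * a - e * u = 0 := hu
      have hv' : σ v * a - e * v = 0 := hv
      have hfix : σ (v * u⁻¹) = v * u⁻¹ := by
        rw [map_mul, map_inv₀]
        have h1 : σ u = e * u / a := by field_simp at hu' ⊢; linear_combination hu'
        have h2 : σ v = e * v / a := by field_simp at hv' ⊢; linear_combination hv'
        rw [h1, h2]
        field_simp
      obtain ⟨k, hk⟩ := hfixr _ hfix
      have : v = k • u := by
        rw [Algebra.smul_def, hk]
        field_simp
      rw [this]
      exact Submodule.smul_mem _ _ (Submodule.mem_span_singleton_self u)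
    calc Module.finrank K (LinearMap.ker (Tmap σ hK e a))
        ≤ Module.finrank K (Submodule.span K {u}) := Submodule.finrank_mono hle
      _ = 1 := finrank_span_singleton hune

lemma point_eval (hK : ∀ k : K, σ (algebraMap K F k) = algebraMap K F k)
    (c : ℕ → F) (d : ℕ) {a b : F} (hb : b ≠ 0)
    (h : Lmap σ hK c d a b = 0) :
    ∑ r ∈ Finset.range (d + 1), c r * genNorm σ (σ b * a * b⁻¹) r = 0 := by
  have h2 : (∑ r ∈ Finset.range (d + 1), c r * genNorm σ (σ b * a * b⁻¹) r) * b = 0 := by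
    rw [Finset.sum_mul, ← h, Lmap_apply]
    refine Finset.sum_congr rfl fun r _ => ?_
    rw [genNorm_conj σ hb]
    field_simp
    try ring
  rcases mul_eq_zero.mp h2 with h' | h'
  · exact h'
  · exact absurd h' hb

lemma const_eval (c g : ℕ → F) (e : F) (d : ℕ)
    (htop : g (d + 1) = 0)
    (hrec : ∀ r ≤ d, c (r + 1) = g r - g (r + 1) * (⇑σ)^[r + 1] e) :
    ∑ r ∈ Finset.range (d + 2), c r * genNorm σ e r = c 0 + g 0 * e := by
  have h := comp_identity σ c g e d htop hrec e 1
  have hz : σ (1 : F) * e - e * 1 = 0 := by rw [map_one]; ring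
  rw [hz] at h
  simp only [it_one σ, it_zero σ, one_mul, zero_mul, mul_zero, mul_one,
    Finset.sum_const_zero, zero_add] at h
  exact h


variable {K F : Type} [Field K] [Field F] [Algebra K F] (σ : F ≃+* F)

/-- Key bound: a nonzero "skew polynomial" of degree `d` has total zero-rank at most `d`
across pairwise non-conjugate nonzero evaluation classes. -/
lemma key_bound [FiniteDimensional K F]
    (hK : ∀ k : K, σ (algebraMap K F k) = algebraMap K F k)
    (hfixr : ∀ w : F, σ w = w → w ∈ Set.range (algebraMap K F))
    {ℓ : ℕ} (aa : Fin ℓ → F) (ha0 : ∀ i, aa i ≠ 0)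
    (haconj : ∀ i j : Fin ℓ, i ≠ j → ¬ SConj σ (aa i) (aa j)) :
    ∀ (d : ℕ) (c : ℕ → F), c d ≠ 0 →
      ∑ i, Module.finrank K (LinearMap.ker (Lmap σ hK c d (aa i))) ≤ d := by
  intro d
  induction d with
  | zero =>
    intro c hc
    have hker : ∀ i, LinearMap.ker (Lmap σ hK c 0 (aa i)) = ⊥ := by
      intro i
      rw [LinearMap.ker_eq_bot']
      intro b hb
      rw [Lmap_apply, Finset.sum_range_one] at hb
      simp only [Function.iterate_zero, id_eq] at hb
      have hN : genNorm σ (aa i) 0 = 1 := rfl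
      rw [hN, mul_one] at hb
      rcases mul_eq_zero.mp hb with h' | h'
      · exact absurd h' hc
      · exact h'
    simp [hker]
  | succ d ih =>
    intro c hc
    by_cases hall : ∀ i, LinearMap.ker (Lmap σ hK c (d + 1) (aa i)) = ⊥
    · have : ∀ i ∈ Finset.univ,
          Module.finrank K (LinearMap.ker (Lmap σ hK c (d + 1) (aa i))) = 0 := by
        intro i _
        rw [hall i, finrank_bot]
      rw [Finset.sum_congr rfl this]
      simp
    · push_neg at hall
      obtain ⟨i, hi⟩ := hall
      obtain ⟨b, hbker, hb⟩ := Submodule.exists_mem_ne_zero_of_ne_bot hi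
      set e : F := σ b * aa i * b⁻¹ with he
      have hσb : σ b ≠ 0 := fun h => hb (σ.injective (h.trans (map_zero σ).symm))
      have he0 : e ≠ 0 := mul_ne_zero (mul_ne_zero hσb (ha0 i)) (inv_ne_zero hb)
      -- quotient coefficients
      set aux : ℕ → F := fun k =>
        Nat.rec (c (d + 1)) (fun k ih => c (d - k) + ih * (⇑σ)^[d - k] e) k with haux
      set g : ℕ → F := fun r => if r ≤ d then aux (d - r) else 0 with hg
      have hgtop : g (d + 1) = 0 := by simp [hg]
      have hgd : g d = c (d + 1) := by simp [hg, haux]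
      have hauxsucc : ∀ k, aux (k + 1) = c (d - k) + aux k * (⇑σ)^[d - k] e := fun k => rfl
      have hrec : ∀ r ≤ d, c (r + 1) = g r - g (r + 1) * (⇑σ)^[r + 1] e := by
        intro r hr
        rcases eq_or_lt_of_le hr with rfl | hlt
        · rw [hgd, hgtop]; ring
        · have h1 : g r = aux (d - r) := by simp [hg, hr]
          have h2 : g (r + 1) = aux (d - r - 1) := by
            have hle : r + 1 ≤ d := hlt
            have heq : d - (r + 1) = d - r - 1 := by omega
            simp only [hg, if_pos hle, heq]
          set k : ℕ := d - r - 1 with hk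
          have h3 : d - r = k + 1 := by omega
          rw [h1, h2, h3, hauxsucc]
          have h4 : d - k = r + 1 := by omega
          rw [h4]
          ring
      -- point evaluation at e vanishes
      have hpt : c 0 + g 0 * e = 0 := by
        rw [← const_eval σ c g e d hgtop hrec]
        exact point_eval σ hK c (d + 1) hb hbker
      -- composition: L_c = L_g ∘ T_e
      have hcomp : ∀ (j : Fin ℓ) (u : F),
          Lmap σ hK c (d + 1) (aa j) u
            = Lmap σ hK g d (aa j) (Tmap σ hK e (aa j) u) := by
        intro j u
        rw [Lmap_apply, Lmap_apply, Tmap_apply]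
        rw [comp_identity σ c g e d hgtop hrec (aa j) u, hpt]
        ring
      -- kernels are contained in comaps
      have hker_le : ∀ j : Fin ℓ,
          LinearMap.ker (Lmap σ hK c (d + 1) (aa j))
            ≤ (LinearMap.ker (Lmap σ hK g d (aa j))).comap (Tmap σ hK e (aa j)) := by
        intro j u hu
        have : Lmap σ hK g d (aa j) (Tmap σ hK e (aa j) u) = 0 := by
          rw [← hcomp j u]; exact hu
        exact this
      -- kernel of T_e at class j
      have hT : ∀ j : Fin ℓ,
          Module.finrank K (LinearMap.ker (Tmap σ hK e (aa j)))
            ≤ if j = i then 1 else 0 := by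
        intro j
        by_cases hji : j = i
        · subst hji
          rw [if_pos rfl]
          exact finrank_ker_Tmap_le_one σ hK hfixr (ha0 j) he0
        · rw [if_neg hji]
          have hbot : LinearMap.ker (Tmap σ hK e (aa j)) = ⊥ := by
            rw [LinearMap.ker_eq_bot']
            intro u hu
            by_contra hune
            have hσu : σ u ≠ 0 := fun h => hune (σ.injective (h.trans (map_zero σ).symm))
            have hu' : σ u * aa j - e * u = 0 := hu
            have h1 : σ u * aa j = e * u := by linear_combination hu'
            have h2 : aa j = (σ u)⁻¹ * e * u := by
              rw [mul_assoc, ← h1, ← mul_assoc, inv_mul_cancel₀ hσu, one_mul]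
            have hSC : SConj σ (aa i) (aa j) := by
              refine ⟨b * u⁻¹, mul_ne_zero hb (inv_ne_zero hune), ?_⟩
              rw [h2, he, map_mul, map_inv₀]
              field_simp
              try ring
            exact haconj i j (fun hij => hji hij.symm) hSC
          rw [hbot, finrank_bot]
      -- assemble
      have hstep : ∀ j : Fin ℓ,
          Module.finrank K (LinearMap.ker (Lmap σ hK c (d + 1) (aa j)))
            ≤ (if j = i then 1 else 0)
              + Module.finrank K (LinearMap.ker (Lmap σ hK g d (aa j))) := by
        intro j
        calc Module.finrank K (LinearMap.ker (Lmap σ hK c (d + 1) (aa j)))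
            ≤ Module.finrank K
                ((LinearMap.ker (Lmap σ hK g d (aa j))).comap (Tmap σ hK e (aa j))) :=
              Submodule.finrank_mono (hker_le j)
          _ ≤ Module.finrank K (LinearMap.ker (Tmap σ hK e (aa j)))
                + Module.finrank K (LinearMap.ker (Lmap σ hK g d (aa j))) :=
              finrank_comap_le _ _
          _ ≤ _ := by
              have := hT j
              omega
      calc ∑ j, Module.finrank K (LinearMap.ker (Lmap σ hK c (d + 1) (aa j)))
          ≤ ∑ j, ((if j = i then 1 else 0)
              + Module.finrank K (LinearMap.ker (Lmap σ hK g d (aa j)))) :=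
            Finset.sum_le_sum fun j _ => hstep j
        _ = (∑ j, if j = i then 1 else 0)
              + ∑ j, Module.finrank K (LinearMap.ker (Lmap σ hK g d (aa j))) :=
            Finset.sum_add_distrib
        _ ≤ 1 + d := by
            have h1 : (∑ j : Fin ℓ, if j = i then 1 else 0) = 1 := by
              rw [Finset.sum_ite_eq' Finset.univ i (fun _ => 1)]
              simp
            have h2 := ih g (by rw [hgd]; exact hc)
            omega
        _ = d + 1 := by omega


variable {K F : Type} [Field K] [Field F] [Algebra K F]

lemma rows_li [Fintype K] [Fintype F] (σ : F ≃+* F)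
    (hK : ∀ k : K, σ (algebraMap K F k) = algebraMap K F k)
    (hfixr : ∀ w : F, σ w = w → w ∈ Set.range (algebraMap K F))
    {ℓ : ℕ} (nn : Fin ℓ → ℕ) (aa : Fin ℓ → F)
    (ha0 : ∀ i, aa i ≠ 0)
    (haconj : ∀ i j : Fin ℓ, i ≠ j → ¬ SConj σ (aa i) (aa j))
    (x : (Σ i : Fin ℓ, Fin (nn i)) → F)
    (hx : ∀ i, rkq K (fun μ : Fin (nn i) => x ⟨i, μ⟩) = nn i)
    (d : ℕ) (hd : d ≤ ∑ i, nn i) :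
    LinearIndependent F (moore σ nn aa d x) := by
  classical
  refine Fintype.linearIndependent_iff.mpr ?_
  intro cf hsum
  by_contra hne
  push_neg at hne
  obtain ⟨r0, hr0⟩ := hne
  set c' : ℕ → F := fun r => if h : r < d then cf ⟨r, h⟩ else 0 with hc'
  set P : ℕ → Prop := fun r => c' r ≠ 0 with hP
  have hPr0 : P (r0 : ℕ) := by
    simp only [hP, hc', dif_pos r0.isLt]
    exact hr0
  set d' := Nat.findGreatest P d with hd'
  have hd'le : d' ≤ d := Nat.findGreatest_le d
  have hcd' : c' d' ≠ 0 := Nat.findGreatest_spec (le_of_lt r0.isLt) hPr0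
  have hd'lt : d' < d := by
    rcases lt_or_eq_of_le hd'le with h | h
    · exact h
    · exfalso; apply hcd'; rw [h]; simp [hc']
  have hzero : ∀ r, d' < r → c' r = 0 := by
    intro r hr
    by_cases hrd : r < d
    · by_contra hne0
      exact Nat.findGreatest_is_greatest hr (le_of_lt hrd) hne0
    · simp [hc', hrd]
  have hmem : ∀ p : (Σ i : Fin ℓ, Fin (nn i)), Lmap σ hK c' d' (aa p.1) (x p) = 0 := by
    intro p
    have h0 : ∑ r ∈ Finset.range d,
        c' r * ((⇑σ)^[r] (x p) * genNorm σ (aa p.1) r) = 0 := by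
      have hcf := congrFun hsum p
      rw [Finset.sum_apply] at hcf
      simp only [Pi.smul_apply, smul_eq_mul, Pi.zero_apply] at hcf
      rw [Finset.sum_range (fun r => c' r * ((⇑σ)^[r] (x p) * genNorm σ (aa p.1) r))]
      rw [← hcf]
      refine Finset.sum_congr rfl fun r _ => ?_
      simp only [hc', dif_pos r.isLt]
      rfl
    rw [Lmap_apply]
    rw [← h0]
    apply Finset.sum_subset
    · intro t ht
      rw [Finset.mem_range] at ht ⊢
      omega
    · intro t ht htn
      rw [Finset.mem_range] at ht htn
      rw [hzero t (by omega)]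
      ring
  have hblock : ∀ i, nn i ≤ Module.finrank K (LinearMap.ker (Lmap σ hK c' d' (aa i))) := by
    intro i
    have hxi := hx i
    rw [rkq] at hxi
    rw [← hxi]
    apply Submodule.finrank_mono
    rw [Submodule.span_le]
    rintro _ ⟨μ, rfl⟩
    exact hmem ⟨i, μ⟩
  have hkey := key_bound σ hK hfixr aa ha0 haconj d' c' hcd'
  have hsumle : (∑ i, nn i) ≤ d' :=
    le_trans (Finset.sum_le_sum fun i _ => hblock i) hkey
  omega

end AuxLemmas

/-- Rank of the σ-generalized Moore matrix.
If `a_1, …, a_ℓ` are nonzero and pairwise non-σ-conjugate, and every block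
`x^(i)` of `x` has `rk_q(x^(i)) = n_i`, then `rk_F(λ_d(x)_a⃗) = min{d, n}`. -/
theorem rank_moore_eq_min
    {K F : Type} [Field K] [Field F] [Algebra K F] [Fintype K] [Fintype F]
    (σ : F ≃+* F)
    (hfix : ∀ x : F, σ x = x ↔ x ∈ Set.range (algebraMap K F))
    {ℓ : ℕ} (hℓ : 1 ≤ ℓ) (nn : Fin ℓ → ℕ) (aa : Fin ℓ → F)
    (ha0 : ∀ i, aa i ≠ 0)
    (haconj : ∀ i j : Fin ℓ, i ≠ j → ¬ SConj σ (aa i) (aa j))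
    (x : (Σ i : Fin ℓ, Fin (nn i)) → F)
    (hx : ∀ i, rkq K (fun μ : Fin (nn i) => x ⟨i, μ⟩) = nn i)
    (d : ℕ) :
    (moore σ nn aa d x).rank = min d (∑ i, nn i) := by
  classical
  have hK : ∀ k : K, σ (algebraMap K F k) = algebraMap K F k :=
    fun k => (hfix _).mpr ⟨k, rfl⟩
  have hfixr : ∀ w : F, σ w = w → w ∈ Set.range (algebraMap K F) :=
    fun w hw => (hfix w).mp hw
  set n := ∑ i, nn i with hn
  have hcard : Fintype.card (Σ i : Fin ℓ, Fin (nn i)) = n := by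
    simp [Fintype.card_sigma, hn]
  have hfull : ∀ d' : ℕ, d' ≤ n → (moore σ nn aa d' x).rank = d' := by
    intro d' hd'
    have hli := rows_li σ hK hfixr nn aa ha0 haconj x hx d' hd'
    exact hli.rank_matrix.trans (Fintype.card_fin _)
  rcases le_or_gt d n with hdn | hdn
  · rw [min_eq_left hdn]
    exact hfull d hdn
  · rw [min_eq_right (le_of_lt hdn)]
    apply le_antisymm
    · calc (moore σ nn aa d x).rank
          ≤ Fintype.card (Σ i : Fin ℓ, Fin (nn i)) := Matrix.rank_le_card_width _
        _ = n := hcard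
    · have h1 : (moore σ nn aa n x).rank = n := hfull n le_rfl
      have h2 : (moore σ nn aa n x).rank ≤ (moore σ nn aa d x).rank := by
        rw [Matrix.rank_eq_finrank_span_row, Matrix.rank_eq_finrank_span_row]
        apply Submodule.finrank_mono
        apply Submodule.span_mono
        rintro _ ⟨r, rfl⟩
        refine ⟨Fin.castLE (le_of_lt hdn) r, ?_⟩
        funext p
        show opev σ (aa p.1) (x p) ((Fin.castLE (le_of_lt hdn) r : Fin d) : ℕ)
          = opev σ (aa p.1) (x p) (r : ℕ)
        rfl
      omega

end Stmt1
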